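/- Let f be a real univariate polynomial and a < b real numbers with f(a)·f(b) ≠ 0. Then f has an even number of real roots (counted with multiplicity) in the open interval (a,b) if and only if f(a)·f(b) > 0. -/
import Mathlib


open Polynomial

lemma prod_pos_iff_even_neg (s : Multiset ℝ) (hs : ∀ x ∈ s, x ≠ 0) :
    0 < s.prod ↔ Even (Multiset.card (s.filter (fun x => x < 0))) := by
  induction s using Multiset.induction with
  | empty => simp
  | cons a s ih =>
    have ha : a ≠ 0 := hs a (Multiset.mem_cons_self a s)
    have hs' : ∀ x ∈ s, x ≠ 0 := fun x hx => hs x (Multiset.mem_cons_of_mem hx)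
    have hsp : s.prod ≠ 0 := Multiset.prod_ne_zero (fun h0 => hs' 0 h0 rfl)
    rw [Multiset.prod_cons, Multiset.filter_cons]
    rcases lt_or_gt_of_ne ha with hlt | hgt
    · have : 0 < a * s.prod ↔ s.prod < 0 := by
        constructor
        · intro hp
          rcases hsp.lt_or_gt with h1 | h1
          · exact h1
          · nlinarith
        · intro hn; nlinarith
      rw [this, if_pos hlt]
      simp only [Multiset.card_add, Multiset.card_singleton]
      rw [add_comm, Nat.even_add_one, ← ih hs']
      constructor
      · intro hn hp; exact absurd hp (not_lt.mpr hn.le)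
      · intro hp; rcases hsp.lt_or_gt with h1 | h1
        · exact h1
        · exact absurd h1 hp
    · have : 0 < a * s.prod ↔ 0 < s.prod := by
        constructor
        · intro hp; rcases hsp.lt_or_gt with h1 | h1
          · nlinarith
          · exact h1
        · intro hp; exact mul_pos hgt hp
      rw [this, if_neg (not_lt.mpr hgt.le)]
      simpa using ih hs'

/-- f has an even number of real roots (with multiplicity) in (a,b)
iff f(a)·f(b) > 0. -/
theorem stmt_0 (f : Polynomial ℝ) (a b : ℝ) (hab : a < b)
    (h : f.eval a * f.eval b ≠ 0) :
    Even (Multiset.card (f.roots.filter (fun r => r ∈ Set.Ioo a b))) ↔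
      0 < f.eval a * f.eval b := by
  have hfa : f.eval a ≠ 0 := left_ne_zero_of_mul h
  have hfb : f.eval b ≠ 0 := right_ne_zero_of_mul h
  have hf : f ≠ 0 := fun hf0 => hfa (by simp [hf0])
  obtain ⟨g, hg⟩ := f.prod_multiset_X_sub_C_dvd
  have hg0 : g ≠ 0 := by
    intro h0
    rw [h0, mul_zero] at hg
    exact hf hg
  have hgroots : g.roots = 0 := by
    have hmul := Polynomial.roots_mul (hg ▸ hf)
    rw [← hg, Polynomial.roots_multiset_prod_X_sub_C] at hmul
    have : Multiset.card f.roots = Multiset.card f.roots + Multiset.card g.roots := by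
      conv_lhs => rw [hmul]
      simp
    have hcard : Multiset.card g.roots = 0 := by omega
    exact Multiset.card_eq_zero.mp hcard
  have hgne : ∀ x : ℝ, g.eval x ≠ 0 := by
    intro x hx
    have : x ∈ g.roots := (Polynomial.mem_roots hg0).mpr hx
    rw [hgroots] at this
    exact Multiset.notMem_zero x this
  -- g has constant sign, hence g(a)*g(b) > 0
  have hgab : 0 < g.eval a * g.eval b := by
    rcases (mul_ne_zero (hgne a) (hgne b)).lt_or_gt with hneg | hpos
    · exfalso
      rcases mul_neg_iff.mp hneg with ⟨hpa, hnb⟩ | ⟨hna, hpb⟩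
      · obtain ⟨c, _, hc0⟩ := intermediate_value_Ioo' hab.le
          (g.continuous.continuousOn (s := Set.Icc a b))
          (Set.mem_Ioo.mpr ⟨hnb, hpa⟩)
        exact hgne c hc0
      · obtain ⟨c, _, hc0⟩ := intermediate_value_Ioo hab.le
          (g.continuous.continuousOn (s := Set.Icc a b))
          (Set.mem_Ioo.mpr ⟨hna, hpb⟩)
        exact hgne c hc0
    · exact hpos
  -- evaluate f at a and b
  have evalf : ∀ x : ℝ, f.eval x = g.eval x * (f.roots.map (fun r => x - r)).prod := by
    intro x
    conv_lhs => rw [hg]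
    rw [Polynomial.eval_mul, Polynomial.eval_multiset_prod, Multiset.map_map]
    simp [mul_comm]
  have hprod : f.eval a * f.eval b =
      (g.eval a * g.eval b) * (f.roots.map (fun r => (a - r) * (b - r))).prod := by
    rw [evalf a, evalf b]
    rw [show (fun r => (a - r) * (b - r)) = fun r => (fun r => a - r) r * (fun r => b - r) r from rfl,
      Multiset.prod_map_mul]
    ring
  set s : Multiset ℝ := f.roots.map (fun r => (a - r) * (b - r)) with hs
  have hroot_ne : ∀ r ∈ f.roots, a ≠ r ∧ b ≠ r := by
    intro r hr
    have hr0 : f.eval r = 0 := (Polynomial.mem_roots hf).mp hr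
    constructor
    · intro he; exact hfa (he ▸ hr0)
    · intro he; exact hfb (he ▸ hr0)
  have hsne : ∀ x ∈ s, x ≠ 0 := by
    intro x hx
    obtain ⟨r, hr, rfl⟩ := Multiset.mem_map.mp hx
    obtain ⟨h1, h2⟩ := hroot_ne r hr
    exact mul_ne_zero (sub_ne_zero.mpr h1) (sub_ne_zero.mpr h2)
  have key : ∀ r : ℝ, ((a - r) * (b - r) < 0 ↔ r ∈ Set.Ioo a b) := by
    intro r
    rw [mul_neg_iff, Set.mem_Ioo]
    constructor
    · rintro (⟨h1, h2⟩ | ⟨h1, h2⟩) <;> constructor <;> linarith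
    · rintro ⟨h1, h2⟩; right; constructor <;> linarith
  have hcards : Multiset.card (f.roots.filter (fun r => r ∈ Set.Ioo a b)) =
      Multiset.card (s.filter (fun x => x < 0)) := by
    rw [hs, Multiset.filter_map, Multiset.card_map]
    congr 1
    apply Multiset.filter_congr
    intro r _
    exact (key r).symm
  rw [hcards, ← prod_pos_iff_even_neg s hsne, hprod]
  exact (mul_pos_iff_of_pos_left hgab).symm
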